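/- Let c > 0, x₁, x₂ ∈ ℝ, τ(x) = 1 + e^{ix}, and let S(x₁,x₂) be the 4×4 Hermitian matrix with 2×2 blocks [[B₁, τ(x₁)I₂],[τ(−x₁)I₂, B₂]], where B₁ = [[c, τ(x₂)],[τ(−x₂), −c]] and B₂ = [[−c, τ(x₂)],[τ(−x₂), c]]. Then the characteristic polynomial of S at λ is (λ² − c² − (|τ(x₂)| + |τ(x₁)|)²)(λ² − c² − (|τ(x₂)| − |τ(x₁)|)²). -/

import Mathlib

open Matrix

noncomputable section

/-- `τ(x) = 1 + e^{ix}`. -/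
def tau (x : ℝ) : ℂ := 1 + Complex.exp (x * Complex.I)

/-- The symbol of the (2,2)-periodic discrete Schrödinger operator with potential
`c_{ij} = (−1)^{i+j} c`. -/
def symb (c x₁ x₂ : ℝ) : Matrix (Fin 2 ⊕ Fin 2) (Fin 2 ⊕ Fin 2) ℂ :=
  Matrix.fromBlocks
    !![(c : ℂ), tau x₂; tau (-x₂), (-c : ℂ)]
    (tau x₁ • (1 : Matrix (Fin 2) (Fin 2) ℂ))
    (tau (-x₁) • (1 : Matrix (Fin 2) (Fin 2) ℂ))
    !![(-c : ℂ), tau x₂; tau (-x₂), (c : ℂ)]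

/-- The characteristic polynomial of the symbol:
`det(S − λI) = (λ² − c² − (|τ(x₂)|+|τ(x₁)|)²)(λ² − c² − (|τ(x₂)|−|τ(x₁)|)²)`. -/
theorem charpoly_symb (c x₁ x₂ lam : ℝ) (hc : 0 < c) :
    (symb c x₁ x₂ - (lam : ℂ) • (1 : Matrix (Fin 2 ⊕ Fin 2) (Fin 2 ⊕ Fin 2) ℂ)).det =
      (( (lam ^ 2 - c ^ 2 - (‖tau x₂‖ + ‖tau x₁‖) ^ 2) *
         (lam ^ 2 - c ^ 2 - (‖tau x₂‖ - ‖tau x₁‖) ^ 2) : ℝ) : ℂ) := by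
  have e0 : (finSumFinEquiv.symm (0 : Fin (2+2))) = Sum.inl 0 := rfl
  have e1 : (finSumFinEquiv.symm (1 : Fin (2+2))) = Sum.inl 1 := rfl
  have e2 : (finSumFinEquiv.symm (2 : Fin (2+2))) = Sum.inr 0 := rfl
  have e3 : (finSumFinEquiv.symm (3 : Fin (2+2))) = Sum.inr 1 := rfl
  have habs : ∀ x : ℝ, tau x * tau (-x) = ((‖tau x‖)^2 : ℝ) := by
    intro x
    have h : tau (-x) = starRingEnd ℂ (tau x) := by
      simp [tau, ← Complex.exp_conj]
    rw [h, Complex.mul_conj, ← Complex.sq_norm]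
  have hdet : (symb c x₁ x₂ - (lam : ℂ) • (1 : Matrix (Fin 2 ⊕ Fin 2) (Fin 2 ⊕ Fin 2) ℂ)).det =
      ((lam:ℂ)^2 - c^2 - tau x₁ * tau (-x₁) - tau x₂ * tau (-x₂))^2
        - 4*(tau x₁ * tau (-x₁))*(tau x₂ * tau (-x₂)) := by
    rw [← Matrix.det_reindex_self finSumFinEquiv]
    have hM : (Matrix.reindex finSumFinEquiv finSumFinEquiv)
        (symb c x₁ x₂ - (lam : ℂ) • (1 : Matrix (Fin 2 ⊕ Fin 2) (Fin 2 ⊕ Fin 2) ℂ)) =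
        !![(c:ℂ) - lam, tau x₂, tau x₁, 0;
           tau (-x₂), -c - lam, 0, tau x₁;
           tau (-x₁), 0, -c - lam, tau x₂;
           0, tau (-x₁), tau (-x₂), (c:ℂ) - lam] := by
      ext i j
      fin_cases i <;> fin_cases j <;>
        simp [e0, e1, e2, e3, symb, Matrix.fromBlocks, Matrix.one_apply]
    rw [hM]
    simp [Matrix.det_succ_row_zero, Fin.sum_univ_succ, Fin.succAbove]
    ring
  rw [hdet, habs x₁, habs x₂]
  push_cast
  ring

end
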